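/- Let k ≥ 1, let m₁,…,m_{2k} be positive integers with m₁ ≥ 2, and let G = Γ(m₁,…,m_{2k}) with Laplacian L. Then for every t ∈ ℝ, exp(−itL) = e^{−itλ₀(1)}·P₁ + Σ_{j=2}^{2k} e^{−itλ(j)}·P_j + (1/n)·J, where: λ₀(1) = m₂+m₄+⋯+m_{2k}; P₁ is the n×n matrix whose top-left m₁×m₁ block equals I − (1/m₁)J and which is zero elsewhere; for 2 ≤ j ≤ 2k, λ(j) = λ₀(j) = m_{j+1}+m_{j+3}+⋯+m_{2k} if j is odd and λ(j) = λ₁(j) = σ_j + m_{j+2}+⋯+m_{2k} if j is even, and P_j is the matrix with entries (P_j)_{ab} = m_j/(σ_{j−1}σ_j) if a,b ∈ B₁ ∪ ⋯ ∪ B_{j−1}, (P_j)_{ab} = −1/σ_j if exactly one of a,b lies in B₁ ∪ ⋯ ∪ B_{j−1} and the other in B_j, (P_j)_{ab} = δ_{ab} − 1/σ_j if a,b ∈ B_j, and 0 otherwise; and J is the n×n all-ones matrix. -/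

import Mathlib

open Finset Matrix

/-- `sig m l = m 1 + ⋯ + m l` (block sizes `m` are indexed starting from 1). -/
def sig (m : ℕ → ℕ) (l : ℕ) : ℕ := ∑ i ∈ Finset.Icc 1 l, m i

/-- The (1-based) index of the block containing the (0-based) vertex `v`:
`blk r m v = b` iff `sig m (b-1) ≤ v < sig m b`. -/
def blk (r : ℕ) (m : ℕ → ℕ) (v : ℕ) : ℕ :=
  1 + ((Finset.Icc 1 r).filter (fun l => sig m l ≤ v)).card

/-- `Γ(m₁,…,m_r) = ((((O_{m₁} ∨ K_{m₂}) ∪ O_{m₃}) ∨ K_{m₄}) ⋯ )`: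
the odd-indexed blocks are added as sets of isolated vertices (disjoint union with `O_{m_l}`)
and the even-indexed blocks are cliques joined to everything already present.  Hence two
distinct vertices are adjacent iff the larger of their two block indices is even.  Vertices
are labelled `0,…,n-1` (`n = m₁+⋯+m_r`), block `B₁` first, then `B₂`, etc. -/
def GammaEven (r : ℕ) (m : ℕ → ℕ) : SimpleGraph (Fin (sig m r)) where
  Adj u v := u ≠ v ∧ (max (blk r m (u : ℕ)) (blk r m (v : ℕ))) % 2 = 0
  symm := by
    constructor
    intro u v h
    exact ⟨h.1.symm, by rw [max_comm]; exact h.2⟩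
  loopless := by constructor; intro u h; exact h.1 rfl

instance (r : ℕ) (m : ℕ → ℕ) : DecidableRel (GammaEven r m).Adj := fun u v =>
  decidable_of_iff (u ≠ v ∧ (max (blk r m (u : ℕ)) (blk r m (v : ℕ))) % 2 = 0) Iff.rfl

/-- `U_t = exp(−itL)`, where `L` is the Laplacian matrix of `G` (diagonal entries the
degrees, entry `−1` for each edge, `0` otherwise). -/
noncomputable def Ut {n : ℕ} (G : SimpleGraph (Fin n)) [DecidableRel G.Adj] (t : ℝ) :
    Matrix (Fin n) (Fin n) ℂ :=
  NormedSpace.exp ((-(Complex.I * (t : ℂ))) • G.lapMatrix ℂ)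

/-- The transfer probability `p_G(i,j,t) = |(U_t)_{j,i}|²`. -/
noncomputable def transferProb {n : ℕ} (G : SimpleGraph (Fin n)) [DecidableRel G.Adj]
    (i j : Fin n) (t : ℝ) : ℝ :=
  ‖Ut G t j i‖ ^ 2

/-- `λ₀(j) = m_{j+1} + m_{j+3} + ⋯ + m_{2k}` (the indices run over `j+1, j+3, …`). -/
def lam0 (k : ℕ) (m : ℕ → ℕ) (j : ℕ) : ℕ :=
  ∑ l ∈ (Finset.Icc (j + 1) (2 * k)).filter (fun l => (l - j) % 2 = 1), m l

/-- `λ₁(j) = σ_j + m_{j+2} + m_{j+4} + ⋯ + m_{2k}` (the sum runs over `j+2, j+4, …`). -/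
def lam1 (k : ℕ) (m : ℕ → ℕ) (j : ℕ) : ℕ :=
  sig m j + ∑ l ∈ (Finset.Icc (j + 2) (2 * k)).filter (fun l => (l - j) % 2 = 0), m l

/-- `λ(j)`: `λ₀(j)` for odd `j`, `λ₁(j)` for even `j`. -/
def lam (k : ℕ) (m : ℕ → ℕ) (j : ℕ) : ℕ :=
  if Odd j then lam0 k m j else lam1 k m j

/-- `P₁`: the matrix whose top-left `m₁ × m₁` block (rows and columns in `B₁`) equals
`I − (1/m₁)J`, and which is zero elsewhere. -/
noncomputable def projOne (k : ℕ) (m : ℕ → ℕ) :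
    Matrix (Fin (sig m (2 * k))) (Fin (sig m (2 * k))) ℂ :=
  Matrix.of fun a b =>
    if blk (2 * k) m (a : ℕ) = 1 ∧ blk (2 * k) m (b : ℕ) = 1 then
      (if a = b then 1 else 0) - 1 / (m 1 : ℂ)
    else 0

/-- `P_j` (`2 ≤ j ≤ 2k`): entries `m_j/(σ_{j−1}σ_j)` on `(B₁∪⋯∪B_{j−1}) × (B₁∪⋯∪B_{j−1})`,
`−1/σ_j` between `B₁∪⋯∪B_{j−1}` and `B_j`, `δ_{ab} − 1/σ_j` on `B_j × B_j`, `0` elsewhere. -/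
noncomputable def projMat (k : ℕ) (m : ℕ → ℕ) (j : ℕ) :
    Matrix (Fin (sig m (2 * k))) (Fin (sig m (2 * k))) ℂ :=
  Matrix.of fun a b =>
    if blk (2 * k) m (a : ℕ) < j ∧ blk (2 * k) m (b : ℕ) < j then
      (m j : ℂ) / ((sig m (j - 1) : ℂ) * (sig m j : ℂ))
    else if (blk (2 * k) m (a : ℕ) < j ∧ blk (2 * k) m (b : ℕ) = j) ∨
            (blk (2 * k) m (a : ℕ) = j ∧ blk (2 * k) m (b : ℕ) < j) then
      -(1 / (sig m j : ℂ))
    else if blk (2 * k) m (a : ℕ) = j ∧ blk (2 * k) m (b : ℕ) = j then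
      (if a = b then 1 else 0) - 1 / (sig m j : ℂ)
    else 0

lemma sig_zero (m : ℕ → ℕ) : sig m 0 = 0 := by simp [sig]
lemma sig_succ (m : ℕ → ℕ) (l : ℕ) : sig m (l+1) = sig m l + m (l+1) := by
  simp [sig, Finset.sum_Icc_succ_top (Nat.le_add_left 1 l)]
lemma sig_mono (m : ℕ → ℕ) : Monotone (sig m) := by
  intro a b hab
  exact Finset.sum_le_sum_of_subset (Finset.Icc_subset_Icc_right hab)
lemma sig_one (m : ℕ → ℕ) : sig m 1 = m 1 := by simp [sig]

lemma one_le_blk (r : ℕ) (m : ℕ → ℕ) (v : ℕ) : 1 ≤ blk r m v := Nat.le_add_right 1 _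

lemma blk_le_iff {r l : ℕ} (m : ℕ → ℕ) (hl : l ≤ r) (v : ℕ) :
    blk r m v ≤ l ↔ v < sig m l := by
  constructor
  · intro h
    rcases Nat.eq_zero_or_pos l with rfl | hl1
    · exact absurd h (by simp [blk])
    by_contra hv
    push_neg at hv
    have hsub : Finset.Icc 1 l ⊆ (Finset.Icc 1 r).filter (fun i => sig m i ≤ v) := by
      intro i hi
      simp only [Finset.mem_Icc, Finset.mem_filter] at hi ⊢
      exact ⟨⟨hi.1, hi.2.trans hl⟩, le_trans (sig_mono m hi.2) hv⟩
    have := Finset.card_le_card hsub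
    simp only [Nat.card_Icc] at this
    unfold blk at h
    omega
  · intro hv
    rcases Nat.eq_zero_or_pos l with rfl | hl1
    · simp [sig_zero] at hv
    have hsub : (Finset.Icc 1 r).filter (fun i => sig m i ≤ v) ⊆ Finset.Icc 1 (l-1) := by
      intro i hi
      simp only [Finset.mem_Icc, Finset.mem_filter] at hi ⊢
      refine ⟨hi.1.1, ?_⟩
      by_contra hli
      push_neg at hli
      have : sig m l ≤ sig m i := sig_mono m (by omega)
      omega
    have := Finset.card_le_card hsub
    simp only [Nat.card_Icc] at this
    unfold blk
    omega

lemma blk_eq_iff {r l : ℕ} (m : ℕ → ℕ) (hl1 : 1 ≤ l) (hlr : l ≤ r) (v : ℕ) :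
    blk r m v = l ↔ sig m (l-1) ≤ v ∧ v < sig m l := by
  have h1 := blk_le_iff m hlr v
  have h2 := blk_le_iff m (show l - 1 ≤ r by omega) v
  have h3 := one_le_blk r m v
  omega

lemma blk_le_r {r : ℕ} (m : ℕ → ℕ) (v : ℕ) (hv : v < sig m r) : blk r m v ≤ r :=
  (blk_le_iff m le_rfl v).mpr hv

lemma sum_range_sig (m : ℕ → ℕ) (F : ℕ → ℂ) (L : ℕ) :
    ∑ i ∈ Finset.range (sig m L), F i
      = ∑ l ∈ Finset.Icc 1 L, ∑ i ∈ Finset.Ico (sig m (l-1)) (sig m l), F i := by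
  induction L with
  | zero => simp [sig_zero]
  | succ L ih =>
    rw [Finset.sum_Icc_succ_top (Nat.le_add_left 1 L), ← ih]
    have h1 : sig m L ≤ sig m (L+1) := sig_mono m (Nat.le_succ L)
    rw [Finset.range_eq_Ico] at *
    rw [← Finset.sum_Ico_consecutive F (Nat.zero_le (sig m L)) h1]
    simp

lemma sum_blk (m : ℕ → ℕ) (r : ℕ) (f : ℕ → ℂ) :
    ∑ c : Fin (sig m r), f (blk r m (c : ℕ)) = ∑ l ∈ Finset.Icc 1 r, (m l : ℂ) * f l := by
  rw [Fin.sum_univ_eq_sum_range (fun i => f (blk r m i)) (sig m r), sum_range_sig]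
  refine Finset.sum_congr rfl fun l hl => ?_
  simp only [Finset.mem_Icc] at hl
  have hblk : ∀ i ∈ Finset.Ico (sig m (l-1)) (sig m l), f (blk r m i) = f l := by
    intro i hi
    simp only [Finset.mem_Ico] at hi
    rw [(blk_eq_iff m hl.1 hl.2 i).mpr hi]
  rw [Finset.sum_congr rfl hblk, Finset.sum_const, Nat.card_Ico]
  have hs : sig m l = sig m (l-1) + m l := by
    have h := sig_succ m (l-1)
    rwa [Nat.sub_add_cancel hl.1] at h
  rw [hs]
  simp [Nat.add_sub_cancel_left, nsmul_eq_mul]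

def Ecap (k : ℕ) (m : ℕ → ℕ) (x : ℕ) : ℕ :=
  ∑ l ∈ (Finset.Icc 1 (2*k)).filter (fun l => x < l ∧ l % 2 = 0), m l
def lamU (k : ℕ) (m : ℕ → ℕ) (j : ℕ) : ℕ :=
  Ecap k m j + (if j % 2 = 0 then sig m j else 0)

lemma lamU_eq_lam (k : ℕ) (m : ℕ → ℕ) {j : ℕ} (hj1 : 1 ≤ j) :
    lamU k m j = lam k m j := by
  rcases Nat.even_or_odd j with hj | hj
  · rw [lam, if_neg (by simp [Nat.not_odd_iff_even.mpr hj]), lam1, lamU, Ecap]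
    rw [Nat.even_iff] at hj
    rw [if_pos hj]
    rw [show ((Finset.Icc 1 (2*k)).filter (fun l => j < l ∧ l % 2 = 0))
        = ((Finset.Icc (j+2) (2*k)).filter (fun l => (l - j) % 2 = 0)) by
      ext l; simp only [Finset.mem_filter, Finset.mem_Icc]; omega]
    ring
  · rw [lam, if_pos hj, lam0, lamU, Ecap]
    rw [Nat.odd_iff] at hj
    rw [if_neg (by omega)]
    rw [show ((Finset.Icc 1 (2*k)).filter (fun l => j < l ∧ l % 2 = 0))
        = ((Finset.Icc (j+1) (2*k)).filter (fun l => (l - j) % 2 = 1)) by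
      ext l; simp only [Finset.mem_filter, Finset.mem_Icc]; omega]
    ring

lemma Ecap_pred (k : ℕ) (m : ℕ → ℕ) {j : ℕ} (hj1 : 1 ≤ j) (hjr : j ≤ 2*k) :
    Ecap k m (j-1) = Ecap k m j + (if j % 2 = 0 then m j else 0) := by
  rcases Nat.even_or_odd j with hj | hj
  · rw [Nat.even_iff] at hj
    rw [if_pos hj, Ecap, Ecap]
    rw [show ((Finset.Icc 1 (2*k)).filter (fun l => j-1 < l ∧ l % 2 = 0))
        = insert j ((Finset.Icc 1 (2*k)).filter (fun l => j < l ∧ l % 2 = 0)) by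
      ext l; simp only [Finset.mem_filter, Finset.mem_Icc, Finset.mem_insert]; omega]
    rw [Finset.sum_insert (by simp only [Finset.mem_filter, Finset.mem_Icc]; omega)]
    ring
  · rw [Nat.odd_iff] at hj
    rw [if_neg (by omega), Ecap, Ecap]
    rw [show ((Finset.Icc 1 (2*k)).filter (fun l => j-1 < l ∧ l % 2 = 0))
        = ((Finset.Icc 1 (2*k)).filter (fun l => j < l ∧ l % 2 = 0)) by
      ext l; simp only [Finset.mem_filter, Finset.mem_Icc]; omega]
    ring

lemma Ecap_split (k : ℕ) (m : ℕ → ℕ) {p L : ℕ} (hp : 1 ≤ p) (hpL : p ≤ L) (hLr : L ≤ 2*k) :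
    Ecap k m p = (∑ l ∈ (Finset.Ioc p L).filter (fun l => l % 2 = 0), m l) + Ecap k m L := by
  rw [Ecap, Ecap, ← Finset.sum_union (by
    rw [Finset.disjoint_left]
    intro x hx hy
    simp only [Finset.mem_filter, Finset.mem_Icc, Finset.mem_Ioc] at hx hy
    omega)]
  congr 1
  ext l
  simp only [Finset.mem_filter, Finset.mem_Icc, Finset.mem_Ioc, Finset.mem_union]
  omega

lemma TNC_low (m : ℕ → ℕ) {p L : ℕ} (hLp : L ≤ p) :
    ∑ l ∈ Finset.Icc 1 L, (m l : ℂ) * (if max p l % 2 = 0 then 1 else 0)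
      = if p % 2 = 0 then (sig m L : ℂ) else 0 := by
  have h : ∀ l ∈ Finset.Icc 1 L, (m l : ℂ) * (if max p l % 2 = 0 then 1 else 0)
      = if p % 2 = 0 then (m l : ℂ) else 0 := by
    intro l hl
    simp only [Finset.mem_Icc] at hl
    rw [max_eq_left (hl.2.trans hLp)]
    split_ifs <;> ring
  rw [Finset.sum_congr rfl h]
  split_ifs
  · rw [sig]; push_cast; rfl
  · simp

lemma TNC_high (k : ℕ) (m : ℕ → ℕ) {p L : ℕ} (hp1 : 1 ≤ p) (hpL : p ≤ L) (hLr : L ≤ 2*k) :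
    ∑ l ∈ Finset.Icc 1 L, (m l : ℂ) * (if max p l % 2 = 0 then 1 else 0)
      = (lamU k m p : ℂ) - (Ecap k m L : ℂ) := by
  have hsplit : Finset.Icc 1 L = Finset.Ioc 0 L := by ext l; simp [Finset.mem_Icc, Finset.mem_Ioc]; omega
  rw [hsplit, ← Finset.sum_Ioc_consecutive _ (Nat.zero_le p) hpL]
  have h1 : ∑ l ∈ Finset.Ioc 0 p, (m l : ℂ) * (if max p l % 2 = 0 then 1 else 0)
      = if p % 2 = 0 then (sig m p : ℂ) else 0 := by
    rw [show Finset.Ioc 0 p = Finset.Icc 1 p by ext l; simp [Finset.mem_Icc, Finset.mem_Ioc]; omega]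
    exact TNC_low m le_rfl
  have h2 : ∑ l ∈ Finset.Ioc p L, (m l : ℂ) * (if max p l % 2 = 0 then 1 else 0)
      = (Ecap k m p : ℂ) - (Ecap k m L : ℂ) := by
    have h3 : ∀ l ∈ Finset.Ioc p L, (m l : ℂ) * (if max p l % 2 = 0 then 1 else 0)
        = if l % 2 = 0 then (m l : ℂ) else 0 := by
      intro l hl
      simp only [Finset.mem_Ioc] at hl
      rw [max_eq_right (le_of_lt hl.1)]
      split_ifs <;> ring
    rw [Finset.sum_congr rfl h3, ← Finset.sum_filter]
    have := Ecap_split k m hp1 hpL hLr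
    have hcast : (Ecap k m p : ℂ)
        = (∑ l ∈ (Finset.Ioc p L).filter (fun l => l % 2 = 0), m l : ℕ) + (Ecap k m L : ℂ) := by
      rw [this]; push_cast; ring
    rw [hcast]; push_cast; ring
  rw [h1, h2, lamU]
  push_cast
  split_ifs <;> ring

lemma Ecap_top (k : ℕ) (m : ℕ → ℕ) : Ecap k m (2*k) = 0 := by
  rw [Ecap, Finset.sum_eq_zero]
  intro l hl
  simp only [Finset.mem_filter, Finset.mem_Icc] at hl
  omega

lemma deg_eq (k : ℕ) (m : ℕ → ℕ) (a : Fin (sig m (2*k))) :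
    ((GammaEven (2*k) m).degree a : ℂ)
      = (lamU k m (blk (2*k) m (a : ℕ)) : ℂ)
        - (if blk (2*k) m (a : ℕ) % 2 = 0 then 1 else 0) := by
  set p := blk (2*k) m (a : ℕ) with hp
  have hdeg : ((GammaEven (2*k) m).degree a : ℂ)
      = ∑ c : Fin (sig m (2*k)), (if (GammaEven (2*k) m).Adj a c then (1:ℂ) else 0) := by
    rw [SimpleGraph.degree, SimpleGraph.neighborFinset_eq_filter, Finset.card_filter]
    push_cast
    rfl
  rw [hdeg]
  have hterm : ∀ c : Fin (sig m (2*k)),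
      (if (GammaEven (2*k) m).Adj a c then (1:ℂ) else 0)
        = (if max p (blk (2*k) m (c : ℕ)) % 2 = 0 then (1:ℂ) else 0)
          - (if c = a then (if p % 2 = 0 then (1:ℂ) else 0) else 0) := by
    intro c
    by_cases hca : c = a
    · subst hca
      rw [if_pos rfl, if_neg (by simp [GammaEven]), max_self]
      ring
    · rw [if_neg hca, sub_zero]
      have hiff : (GammaEven (2*k) m).Adj a c ↔ max p (blk (2*k) m (c : ℕ)) % 2 = 0 :=
        ⟨fun h => h.2, fun h => ⟨fun he => hca he.symm, h⟩⟩
      rw [if_congr hiff rfl rfl]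
  rw [Finset.sum_congr rfl (fun c _ => hterm c), Finset.sum_sub_distrib,
    Finset.sum_ite_eq' Finset.univ a (fun _ => (if p % 2 = 0 then (1:ℂ) else 0)),
    if_pos (Finset.mem_univ a),
    sum_blk m (2*k) (fun l => if max p l % 2 = 0 then (1:ℂ) else 0),
    TNC_high k m (one_le_blk (2*k) m (a:ℕ)) (blk_le_r m (a:ℕ) a.isLt) le_rfl,
    Ecap_top]
  push_cast
  ring

lemma lap_entry (k : ℕ) (m : ℕ → ℕ) (a c : Fin (sig m (2*k))) :
    (GammaEven (2*k) m).lapMatrix ℂ a c =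
      (if max (blk (2*k) m (a : ℕ)) (blk (2*k) m (c : ℕ)) % 2 = 0 then (-1:ℂ) else 0)
      + (if a = c then (lamU k m (blk (2*k) m (a : ℕ)) : ℂ) else 0) := by
  rw [SimpleGraph.lapMatrix, Matrix.sub_apply, SimpleGraph.degMatrix,
    SimpleGraph.adjMatrix_apply]
  by_cases hac : a = c
  · subst hac
    rw [Matrix.diagonal_apply_eq, if_pos rfl, if_neg ((GammaEven (2*k) m).loopless.irrefl a),
      deg_eq, max_self]
    split_ifs <;> ring
  · rw [Matrix.diagonal_apply_ne _ hac, if_neg hac, add_zero]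
    by_cases hadj : (GammaEven (2*k) m).Adj a c
    · rw [if_pos hadj, if_pos hadj.2]
      ring
    · rw [if_neg hadj, if_neg (fun h => hadj ⟨hac, h⟩)]
      ring

noncomputable def gfun (q j : ℕ) (sj α : ℂ) : ℕ → ℂ := fun l =>
  if q ≤ j ∧ l ≤ j then (if l = j ∨ q = j then -(1/sj) else α) else 0
noncomputable def wfun (x y : ℕ) : ℂ := if max x y % 2 = 0 then -1 else 0

lemma sig_ge (m : ℕ → ℕ) {l : ℕ} (hl : 1 ≤ l) : m 1 ≤ sig m l :=
  Finset.single_le_sum (f := m) (fun _ _ => Nat.zero_le _)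
    (Finset.mem_Icc.mpr ⟨le_rfl, hl⟩)

lemma proj_entry (k : ℕ) (m : ℕ → ℕ) (j : ℕ) (c b : Fin (sig m (2*k))) :
    projMat k m j c b =
      gfun (blk (2*k) m (b : ℕ)) j (sig m j : ℂ)
        ((m j : ℂ) / ((sig m (j-1) : ℂ) * (sig m j : ℂ))) (blk (2*k) m (c : ℕ))
      + (if c = b ∧ blk (2*k) m (b : ℕ) = j then 1 else 0) := by
  simp only [projMat, Matrix.of_apply, gfun]
  by_cases hcb : c = b
  · subst hcb
    rcases lt_trichotomy (blk (2*k) m (c : ℕ)) j with h | h | h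
    · rw [if_pos (show _ ∧ _ from ⟨h, h⟩),
        if_pos (show _ ∧ _ from ⟨le_of_lt h, le_of_lt h⟩),
        if_neg (show ¬(blk (2*k) m (c:ℕ) = j ∨ blk (2*k) m (c:ℕ) = j) by omega),
        if_neg (show ¬(c = c ∧ blk (2*k) m (c:ℕ) = j) from fun hh => by omega)]
      ring
    · rw [if_neg (show ¬(blk (2*k) m (c:ℕ) < j ∧ blk (2*k) m (c:ℕ) < j) by omega),
        if_neg (show ¬((blk (2*k) m (c:ℕ) < j ∧ blk (2*k) m (c:ℕ) = j) ∨
          (blk (2*k) m (c:ℕ) = j ∧ blk (2*k) m (c:ℕ) < j)) by omega),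
        if_pos (show _ ∧ _ from ⟨h, h⟩), if_pos rfl,
        if_pos (show _ ∧ _ from ⟨le_of_eq h, le_of_eq h⟩),
        if_pos (Or.inl h), if_pos (show c = c ∧ _ from ⟨rfl, h⟩)]
      ring
    · rw [if_neg (show ¬(blk (2*k) m (c:ℕ) < j ∧ blk (2*k) m (c:ℕ) < j) by omega),
        if_neg (show ¬((blk (2*k) m (c:ℕ) < j ∧ blk (2*k) m (c:ℕ) = j) ∨
          (blk (2*k) m (c:ℕ) = j ∧ blk (2*k) m (c:ℕ) < j)) by omega),
        if_neg (show ¬(blk (2*k) m (c:ℕ) = j ∧ blk (2*k) m (c:ℕ) = j) by omega),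
        if_neg (show ¬(blk (2*k) m (c:ℕ) ≤ j ∧ blk (2*k) m (c:ℕ) ≤ j) by omega),
        if_neg (show ¬(c = c ∧ blk (2*k) m (c:ℕ) = j) from fun hh => by omega)]
      ring
  · have hδ : ¬(c = b ∧ blk (2*k) m (b:ℕ) = j) := fun hh => hcb hh.1
    rw [if_neg hδ, add_zero]
    set p := blk (2*k) m (c : ℕ) with hp
    set q := blk (2*k) m (b : ℕ) with hq
    rcases lt_trichotomy p j with h | h | h <;> rcases lt_trichotomy q j with h' | h' | h'
    · rw [if_pos (show p < j ∧ q < j from ⟨h, h'⟩),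
        if_pos (show q ≤ j ∧ p ≤ j from ⟨le_of_lt h', le_of_lt h⟩),
        if_neg (show ¬(p = j ∨ q = j) by omega)]
    · rw [if_neg (show ¬(p < j ∧ q < j) by omega),
        if_pos (Or.inl (show p < j ∧ q = j from ⟨h, h'⟩)),
        if_pos (show q ≤ j ∧ p ≤ j from ⟨le_of_eq h', le_of_lt h⟩),
        if_pos (Or.inr h')]
    · rw [if_neg (show ¬(p < j ∧ q < j) by omega),
        if_neg (show ¬((p < j ∧ q = j) ∨ (p = j ∧ q < j)) by omega),
        if_neg (show ¬(p = j ∧ q = j) by omega),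
        if_neg (show ¬(q ≤ j ∧ p ≤ j) by omega)]
    · rw [if_neg (show ¬(p < j ∧ q < j) by omega),
        if_pos (Or.inr (show p = j ∧ q < j from ⟨h, h'⟩)),
        if_pos (show q ≤ j ∧ p ≤ j from ⟨le_of_lt h', le_of_eq h⟩),
        if_pos (Or.inl h)]
    · rw [if_neg (show ¬(p < j ∧ q < j) by omega),
        if_neg (show ¬((p < j ∧ q = j) ∨ (p = j ∧ q < j)) by omega),
        if_pos (show p = j ∧ q = j from ⟨h, h'⟩), if_neg hcb,
        if_pos (show q ≤ j ∧ p ≤ j from ⟨le_of_eq h', le_of_eq h⟩),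
        if_pos (Or.inl h)]
      ring
    · rw [if_neg (show ¬(p < j ∧ q < j) by omega),
        if_neg (show ¬((p < j ∧ q = j) ∨ (p = j ∧ q < j)) by omega),
        if_neg (show ¬(p = j ∧ q = j) by omega),
        if_neg (show ¬(q ≤ j ∧ p ≤ j) by omega)]
    · rw [if_neg (show ¬(p < j ∧ q < j) by omega),
        if_neg (show ¬((p < j ∧ q = j) ∨ (p = j ∧ q < j)) by omega),
        if_neg (show ¬(p = j ∧ q = j) by omega),
        if_neg (show ¬(q ≤ j ∧ p ≤ j) by omega)]
    · rw [if_neg (show ¬(p < j ∧ q < j) by omega),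
        if_neg (show ¬((p < j ∧ q = j) ∨ (p = j ∧ q < j)) by omega),
        if_neg (show ¬(p = j ∧ q = j) by omega),
        if_neg (show ¬(q ≤ j ∧ p ≤ j) by omega)]
    · rw [if_neg (show ¬(p < j ∧ q < j) by omega),
        if_neg (show ¬((p < j ∧ q = j) ∨ (p = j ∧ q < j)) by omega),
        if_neg (show ¬(p = j ∧ q = j) by omega),
        if_neg (show ¬(q ≤ j ∧ p ≤ j) by omega)]

lemma sig_ge' (m : ℕ → ℕ) {l : ℕ} (hl : 1 ≤ l) : m 1 ≤ sig m l :=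
  Finset.single_le_sum (f := m) (fun _ _ => Nat.zero_le _)
    (Finset.mem_Icc.mpr ⟨le_rfl, hl⟩)

lemma sig_cast_ne (m : ℕ → ℕ) (hm1 : 2 ≤ m 1) {l : ℕ} (hl : 1 ≤ l) : (sig m l : ℂ) ≠ 0 := by
  have := sig_ge' m hl
  exact Nat.cast_ne_zero.mpr (by omega)

lemma lamU_cast (k : ℕ) (m : ℕ → ℕ) (j : ℕ) :
    (lamU k m j : ℂ) = (Ecap k m j : ℂ) + (if j % 2 = 0 then (sig m j : ℂ) else 0) := by
  rw [lamU]; split_ifs <;> push_cast <;> ring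

lemma Icc_one_eq_Ioc (x : ℕ) : Finset.Icc 1 x = Finset.Ioc 0 x := by
  ext l; simp only [Finset.mem_Icc, Finset.mem_Ioc]; omega

lemma term_eq (k : ℕ) (m : ℕ → ℕ) (j : ℕ) (a b c : Fin (sig m (2*k))) :
    (GammaEven (2*k) m).lapMatrix ℂ a c * projMat k m j c b
      = wfun (blk (2*k) m (a:ℕ)) (blk (2*k) m (c:ℕ)) *
          gfun (blk (2*k) m (b:ℕ)) j (sig m j : ℂ)
            ((m j : ℂ) / ((sig m (j-1) : ℂ) * (sig m j : ℂ))) (blk (2*k) m (c:ℕ))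
        + ((if c = b then (if blk (2*k) m (b:ℕ) = j
              then wfun (blk (2*k) m (a:ℕ)) (blk (2*k) m (b:ℕ)) else 0) else 0)
          + ((if c = a then (lamU k m (blk (2*k) m (a:ℕ)) : ℂ) *
                gfun (blk (2*k) m (b:ℕ)) j (sig m j : ℂ)
                  ((m j : ℂ) / ((sig m (j-1) : ℂ) * (sig m j : ℂ))) (blk (2*k) m (a:ℕ)) else 0)
            + (if c = a then (if a = b ∧ blk (2*k) m (b:ℕ) = j
                then (lamU k m j : ℂ) else 0) else 0))) := by
  have hlap := lap_entry k m a c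
  have hw : (if max (blk (2*k) m (a:ℕ)) (blk (2*k) m (c:ℕ)) % 2 = 0 then (-1:ℂ) else 0)
      = wfun (blk (2*k) m (a:ℕ)) (blk (2*k) m (c:ℕ)) := rfl
  rw [hw] at hlap
  rw [hlap, proj_entry k m j c b]
  by_cases hca : c = a <;> by_cases hcb : c = b
  · -- c = a and c = b, so a = b
    have hab : a = b := hca.symm.trans hcb
    have hba : blk (2*k) m (a:ℕ) = blk (2*k) m (b:ℕ) := by rw [hab]
    have hbc : blk (2*k) m (c:ℕ) = blk (2*k) m (b:ℕ) := by rw [hcb]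
    rw [if_pos hca.symm, if_pos hca, if_pos hca, if_pos hcb, hbc, hba]
    by_cases hqj : blk (2*k) m (b:ℕ) = j
    · rw [if_pos ⟨hcb, hqj⟩, if_pos hqj, if_pos ⟨hab, hqj⟩]
      have hlam : lamU k m (blk (2*k) m (b:ℕ)) = lamU k m j := by rw [hqj]
      rw [hlam]
      ring
    · rw [if_neg (fun hh => hqj hh.2), if_neg hqj, if_neg (fun hh => hqj hh.2)]
      ring
  · have hbc : blk (2*k) m (c:ℕ) = blk (2*k) m (a:ℕ) := by rw [hca]
    have hab : ¬ a = b := fun hh => hcb (hca.trans hh)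
    rw [if_pos hca.symm, if_pos hca, if_pos hca, if_neg hcb,
      if_neg (fun hh : c = b ∧ _ => hcb hh.1), if_neg (fun hh : a = b ∧ _ => hab hh.1), hbc]
    ring
  · have hbc : blk (2*k) m (c:ℕ) = blk (2*k) m (b:ℕ) := by rw [hcb]
    rw [if_neg (fun hh : a = c => hca hh.symm), if_neg hca, if_neg hca, if_pos hcb, hbc]
    by_cases hqj : blk (2*k) m (b:ℕ) = j
    · rw [if_pos ⟨hcb, hqj⟩, if_pos hqj]
      ring
    · rw [if_neg (fun hh => hqj hh.2), if_neg hqj]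
      ring
  · rw [if_neg (fun hh : a = c => hca hh.symm), if_neg hca, if_neg hca, if_neg hcb,
      if_neg (fun hh : c = b ∧ _ => hcb hh.1)]
    ring

lemma hkey_lemma (k : ℕ) (m : ℕ → ℕ) (hm1 : 2 ≤ m 1) {j p q : ℕ}
    (hj1 : 1 ≤ j) (hjr : j ≤ 2*k) (hp1 : 1 ≤ p) (hpr : p ≤ 2*k) (hq1 : 1 ≤ q) :
    (∑ l ∈ Finset.Icc 1 (2*k), (m l : ℂ) *
        (wfun p l * gfun q j (sig m j : ℂ)
          ((m j : ℂ) / ((sig m (j-1) : ℂ) * (sig m j : ℂ))) l))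
      + (if q = j then wfun p q else 0)
      + (lamU k m p : ℂ) * gfun q j (sig m j : ℂ)
          ((m j : ℂ) / ((sig m (j-1) : ℂ) * (sig m j : ℂ))) p
      = (lamU k m j : ℂ) * gfun q j (sig m j : ℂ)
          ((m j : ℂ) / ((sig m (j-1) : ℂ) * (sig m j : ℂ))) p := by
  set sj : ℂ := (sig m j : ℂ) with hsj
  set sj1 : ℂ := (sig m (j-1) : ℂ) with hsj1
  set α : ℂ := (m j : ℂ) / (sj1 * sj) with hα
  have hsj0 : sj ≠ 0 := sig_cast_ne m hm1 hj1
  by_cases hq : q ≤ j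
  · -- restrict the sum to Icc 1 j
    have hzero : ∀ l ∈ Finset.Ioc j (2*k),
        (m l : ℂ) * (wfun p l * gfun q j sj α l) = 0 := by
      intro l hl
      simp only [Finset.mem_Ioc] at hl
      rw [gfun, if_neg (show ¬(q ≤ j ∧ l ≤ j) from fun hh => by omega)]
      ring
    have hrestrict : (∑ l ∈ Finset.Icc 1 (2*k), (m l : ℂ) * (wfun p l * gfun q j sj α l))
        = ∑ l ∈ Finset.Icc 1 j, (m l : ℂ) * (wfun p l * gfun q j sj α l) := by
      rw [Icc_one_eq_Ioc, ← Finset.sum_Ioc_consecutive _ (Nat.zero_le j) hjr,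
        Finset.sum_eq_zero hzero, add_zero, ← Icc_one_eq_Ioc]
    rw [hrestrict]
    rcases eq_or_lt_of_le hq with hqj | hqj
    · -- q = j
      have hconst : ∀ l ∈ Finset.Icc 1 j, (m l : ℂ) * (wfun p l * gfun q j sj α l)
          = (1/sj) * ((m l : ℂ) * (if max p l % 2 = 0 then 1 else 0)) := by
        intro l hl
        simp only [Finset.mem_Icc] at hl
        rw [gfun, if_pos (show q ≤ j ∧ l ≤ j from ⟨hq, hl.2⟩), if_pos (Or.inr hqj), wfun]
        split_ifs <;> ring
      rw [Finset.sum_congr rfl hconst, ← Finset.mul_sum, if_pos hqj,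
        show wfun p q = wfun p j by rw [hqj]]
      by_cases hpj : p ≤ j
      · rw [TNC_high k m hp1 hpj hjr]
        simp only [gfun]
        rw [if_pos (show q ≤ j ∧ p ≤ j from ⟨hq, hpj⟩),
          if_pos (show p = j ∨ q = j from Or.inr hqj),
          wfun, max_eq_right hpj, lamU_cast k m j, ← hsj]
        rcases Nat.even_or_odd j with he | he
        · rw [Nat.even_iff] at he
          simp only [he, reduceIte]
          field_simp
          ring
        · rw [Nat.odd_iff] at he
          simp only [he, Nat.one_ne_zero, reduceIte]
          ring
      · push_neg at hpj
        rw [TNC_low m (le_of_lt hpj)]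
        simp only [gfun]
        rw [if_neg (show ¬(q ≤ j ∧ p ≤ j) from fun hh => by omega),
          wfun, max_eq_left (le_of_lt hpj)]
        rcases Nat.even_or_odd p with he | he
        · rw [Nat.even_iff] at he
          simp only [he, reduceIte]
          field_simp
          rw [hsj]; ring
        · rw [Nat.odd_iff] at he
          simp only [he, Nat.one_ne_zero, reduceIte]
          ring
    · -- q < j
      have hj2 : 2 ≤ j := by omega
      have hsj10 : sj1 ≠ 0 := sig_cast_ne m hm1 (by omega)
      have hsig : sj = sj1 + (m j : ℂ) := by
        rw [hsj, hsj1]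
        have h2 := sig_succ m (j-1)
        rw [Nat.sub_add_cancel hj1] at h2
        rw [h2]
        push_cast
        ring
      have hqne : ¬ q = j := by omega
      rw [if_neg hqne, add_zero]
      have hIoc : Finset.Ioc (j-1) j = {j} := by
        ext l; simp only [Finset.mem_Ioc, Finset.mem_singleton]; omega
      have hsplit2 : (∑ l ∈ Finset.Icc 1 j, (m l : ℂ) * (wfun p l * gfun q j sj α l))
          = (∑ l ∈ Finset.Icc 1 (j-1), (m l : ℂ) * (wfun p l * gfun q j sj α l))
            + (m j : ℂ) * (wfun p j * gfun q j sj α j) := by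
        rw [Icc_one_eq_Ioc, ← Finset.sum_Ioc_consecutive _ (Nat.zero_le (j-1)) (show j-1 ≤ j by omega),
          hIoc, Finset.sum_singleton, ← Icc_one_eq_Ioc]
      have hgj : gfun q j sj α j = -(1/sj) := by
        rw [gfun, if_pos (show q ≤ j ∧ j ≤ j from ⟨hq, le_rfl⟩),
          if_pos (show j = j ∨ q = j from Or.inl rfl)]
      have hconst : ∀ l ∈ Finset.Icc 1 (j-1), (m l : ℂ) * (wfun p l * gfun q j sj α l)
          = (-α) * ((m l : ℂ) * (if max p l % 2 = 0 then 1 else 0)) := by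
        intro l hl
        simp only [Finset.mem_Icc] at hl
        rw [gfun, if_pos (show q ≤ j ∧ l ≤ j from ⟨hq, by omega⟩),
          if_neg (show ¬(l = j ∨ q = j) from fun hh => by omega), wfun]
        split_ifs <;> ring
      rw [hsplit2, Finset.sum_congr rfl hconst, ← Finset.mul_sum, hgj]
      have hE1 : (Ecap k m (j-1) : ℂ)
          = (Ecap k m j : ℂ) + (if j % 2 = 0 then (m j : ℂ) else 0) := by
        rw [Ecap_pred k m hj1 hjr]
        split_ifs <;> push_cast <;> ring
      rcases lt_trichotomy p j with hpj | hpj | hpj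
      · rw [TNC_high k m hp1 (show p ≤ j - 1 by omega) (show j - 1 ≤ 2*k by omega)]
        simp only [gfun]
        rw [if_pos (show q ≤ j ∧ p ≤ j from ⟨hq, le_of_lt hpj⟩),
          if_neg (show ¬(p = j ∨ q = j) from fun hh => by omega),
          wfun, max_eq_right (le_of_lt hpj), hE1, lamU_cast k m j, ← hsj]
        rcases Nat.even_or_odd j with he | he
        · rw [Nat.even_iff] at he
          simp only [he, reduceIte]
          rw [hα, hsig]
          have hsum0 : sj1 + (m j : ℂ) ≠ 0 := by rw [← hsig]; exact hsj0
          field_simp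
          ring
        · rw [Nat.odd_iff] at he
          simp only [he, Nat.one_ne_zero, reduceIte]
          rw [hα]
          field_simp
          ring
      · rw [TNC_low m (show j - 1 ≤ p by omega)]
        simp only [gfun]
        rw [if_pos (show q ≤ j ∧ p ≤ j from ⟨hq, le_of_eq hpj⟩),
          if_pos (show p = j ∨ q = j from Or.inl hpj),
          wfun, max_eq_right (le_of_eq hpj),
          show lamU k m p = lamU k m j by rw [hpj]]
        rcases Nat.even_or_odd j with he | he
        · rw [Nat.even_iff] at he
          have hpe : p % 2 = 0 := by omega
          simp only [he, hpe, reduceIte]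
          rw [hα, ← hsj1]
          field_simp
          ring
        · rw [Nat.odd_iff] at he
          have hpe : p % 2 = 1 := by omega
          simp only [he, hpe, Nat.one_ne_zero, reduceIte]
          ring
      · rw [TNC_low m (show j - 1 ≤ p by omega)]
        simp only [gfun]
        rw [if_neg (show ¬(q ≤ j ∧ p ≤ j) from fun hh => by omega),
          wfun, max_eq_left (le_of_lt hpj)]
        rcases Nat.even_or_odd p with he | he
        · rw [Nat.even_iff] at he
          simp only [he, reduceIte]
          rw [hα, ← hsj1]
          field_simp
          ring
        · rw [Nat.odd_iff] at he
          simp only [he, Nat.one_ne_zero, reduceIte]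
          ring
  · -- j < q : everything vanishes
    have hgz : ∀ l, gfun q j sj α l = 0 := by
      intro l
      rw [gfun, if_neg (fun hh => hq hh.1)]
    simp only [hgz, mul_zero, Finset.sum_const_zero,
      if_neg (show ¬ q = j by omega)]
    ring

lemma lap_mul_proj (k : ℕ) (m : ℕ → ℕ) (hm1 : 2 ≤ m 1) {j : ℕ}
    (hj1 : 1 ≤ j) (hjr : j ≤ 2*k) :
    (GammaEven (2*k) m).lapMatrix ℂ * projMat k m j
      = (lamU k m j : ℂ) • projMat k m j := by
  ext a b
  rw [Matrix.mul_apply, Matrix.smul_apply, smul_eq_mul,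
    Finset.sum_congr rfl (fun c _ => term_eq k m j a b c),
    Finset.sum_add_distrib, Finset.sum_add_distrib, Finset.sum_add_distrib,
    sum_blk m (2*k) (fun l => wfun (blk (2*k) m (a:ℕ)) l *
      gfun (blk (2*k) m (b:ℕ)) j (sig m j : ℂ)
        ((m j : ℂ) / ((sig m (j-1) : ℂ) * (sig m j : ℂ))) l),
    Finset.sum_ite_eq' Finset.univ b _, if_pos (Finset.mem_univ b),
    Finset.sum_ite_eq' Finset.univ a _, if_pos (Finset.mem_univ a),
    Finset.sum_ite_eq' Finset.univ a _, if_pos (Finset.mem_univ a),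
    proj_entry k m j a b]
  have hkey := hkey_lemma k m hm1 hj1 hjr (one_le_blk (2*k) m (a:ℕ))
    (blk_le_r m (a:ℕ) a.isLt) (one_le_blk (2*k) m (b:ℕ))
  have hdelta : (if a = b ∧ blk (2*k) m (b:ℕ) = j then (lamU k m j : ℂ) else 0)
      = (lamU k m j : ℂ) * (if a = b ∧ blk (2*k) m (b:ℕ) = j then 1 else 0) := by
    split_ifs <;> ring
  rw [mul_add, hdelta]
  linear_combination hkey

lemma telescope_sum (k : ℕ) (m : ℕ → ℕ) (hm1 : 2 ≤ m 1) {s R : ℕ} (hs : 1 ≤ s) (hsR : s ≤ R) :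
    ∑ j ∈ Finset.Ioc s R, (m j : ℂ) / ((sig m (j-1) : ℂ) * (sig m j : ℂ))
      = (sig m s : ℂ)⁻¹ - (sig m R : ℂ)⁻¹ := by
  induction R, hsR using Nat.le_induction with
  | base => simp
  | succ R hsR ih =>
    rw [Finset.sum_Ioc_succ_top hsR, ih]
    have h1 : (sig m R : ℂ) ≠ 0 := sig_cast_ne m hm1 (by omega)
    have h2 : (sig m (R+1) : ℂ) ≠ 0 := sig_cast_ne m hm1 (by omega)
    have h3 : (sig m (R+1) : ℂ) = (sig m R : ℂ) + (m (R+1) : ℂ) := by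
      rw [sig_succ m R]; push_cast; ring
    rw [show R + 1 - 1 = R from rfl, h3]
    have h2' : (sig m R : ℂ) + (m (R+1) : ℂ) ≠ 0 := by rw [← h3]; exact h2
    field_simp
    ring

lemma sum_proj_id (k : ℕ) (m : ℕ → ℕ) (hm1 : 2 ≤ m 1) (hk : 1 ≤ k) :
    (∑ j ∈ Finset.Icc 1 (2*k), projMat k m j)
      + ((sig m (2*k) : ℂ))⁻¹ • (Matrix.of fun _ _ => (1:ℂ)) = 1 := by
  ext a b
  rw [Matrix.add_apply, Matrix.sum_apply, Matrix.smul_apply, Matrix.of_apply,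
    Matrix.one_apply, smul_eq_mul, mul_one]
  set p := blk (2*k) m (a:ℕ) with hp
  set q := blk (2*k) m (b:ℕ) with hq
  set s := max p q with hs
  have hp1 : 1 ≤ p := one_le_blk _ _ _
  have hpr : p ≤ 2*k := blk_le_r m _ a.isLt
  have hq1 : 1 ≤ q := one_le_blk _ _ _
  have hqr : q ≤ 2*k := blk_le_r m _ b.isLt
  have hs1 : 1 ≤ s := le_trans hp1 (le_max_left _ _)
  have hsr : s ≤ 2*k := max_le hpr hqr
  have hssig : (sig m s : ℂ) ≠ 0 := sig_cast_ne m hm1 hs1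
  have hrsig : (sig m (2*k) : ℂ) ≠ 0 := sig_cast_ne m hm1 (by omega)
  have habpq : a = b → p = q := fun h => by rw [hp, hq, h]
  -- split the sum at s
  have hsplit : Finset.Icc 1 (2*k) = Finset.Ioc 0 s ∪ Finset.Ioc s (2*k) := by
    rw [Finset.Ioc_union_Ioc_eq_Ioc (Nat.zero_le s) hsr, Icc_one_eq_Ioc]
  rw [hsplit, Finset.sum_union (by
    rw [Finset.disjoint_left]
    intro x hx hy
    simp only [Finset.mem_Ioc] at hx hy
    omega)]
  have h1 : ∑ j ∈ Finset.Ioc 0 s, projMat k m j a b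
      = (if a = b then 1 else 0) - 1/(sig m s : ℂ) := by
    have hside : ∀ j ∈ Finset.Ioc 0 s, j ≠ s → projMat k m j a b = 0 := by
      intro j hj hjs
      simp only [Finset.mem_Ioc] at hj
      simp only [projMat, Matrix.of_apply, ← hp, ← hq]
      rw [if_neg (show ¬(p < j ∧ q < j) by omega),
        if_neg (show ¬((p < j ∧ q = j) ∨ (p = j ∧ q < j)) by omega),
        if_neg (show ¬(p = j ∧ q = j) by omega)]
    rw [Finset.sum_eq_single_of_mem s (by simp only [Finset.mem_Ioc]; omega) hside]
    · -- the j = s term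
      simp only [projMat, Matrix.of_apply, ← hp, ← hq]
      rcases lt_trichotomy p q with hpq | hpq | hpq
      · have hqs : q = s := by omega
        have hab : ¬ a = b := fun h => by have := habpq h; omega
        rw [if_neg (show ¬(p < s ∧ q < s) by omega),
          if_pos (show (p < s ∧ q = s) ∨ (p = s ∧ q < s) from Or.inl ⟨by omega, hqs⟩),
          if_neg hab]
        ring
      · have hps : p = s := by omega
        rw [if_neg (show ¬(p < s ∧ q < s) by omega),
          if_neg (show ¬((p < s ∧ q = s) ∨ (p = s ∧ q < s)) by omega),
          if_pos (show p = s ∧ q = s by omega)]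
      · have hps : p = s := by omega
        have hab : ¬ a = b := fun h => by have := habpq h; omega
        rw [if_neg (show ¬(p < s ∧ q < s) by omega),
          if_pos (show (p < s ∧ q = s) ∨ (p = s ∧ q < s) from Or.inr ⟨hps, by omega⟩),
          if_neg hab]
        ring
  have h2 : ∑ j ∈ Finset.Ioc s (2*k), projMat k m j a b
      = (sig m s : ℂ)⁻¹ - (sig m (2*k) : ℂ)⁻¹ := by
    rw [← telescope_sum k m hm1 hs1 hsr]
    refine Finset.sum_congr rfl fun j hj => ?_
    simp only [Finset.mem_Ioc] at hj
    simp only [projMat, Matrix.of_apply, ← hp, ← hq]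
    rw [if_pos (show p < j ∧ q < j by omega)]
  rw [h1, h2, one_div]
  ring

lemma lap_mul_J (k : ℕ) (m : ℕ → ℕ) :
    (GammaEven (2*k) m).lapMatrix ℂ * (Matrix.of fun _ _ => (1:ℂ)) = 0 := by
  ext a b
  rw [Matrix.mul_apply]
  have := congr_fun (SimpleGraph.lapMatrix_mulVec_const_eq_zero (R := ℂ) (G := GammaEven (2*k) m)) a
  simp only [Matrix.mulVec, dotProduct, Function.const, Pi.zero_apply] at this
  simpa using this

open NormedSpace in
lemma exp_mul_eigen {N : Type*} [Fintype N] [DecidableEq N] (A B : Matrix N N ℂ) (μ : ℂ)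
    (h : A * B = μ • B) : NormedSpace.exp A * B = Complex.exp μ • B := by
  letI : SeminormedRing (Matrix N N ℂ) := Matrix.linftyOpSemiNormedRing
  letI : NormedRing (Matrix N N ℂ) := Matrix.linftyOpNormedRing
  letI : NormedAlgebra ℂ (Matrix N N ℂ) := Matrix.linftyOpNormedAlgebra
  have hpow : ∀ i : ℕ, A ^ i * B = μ ^ i • B := by
    intro i
    induction i with
    | zero => simp
    | succ i ih =>
      rw [pow_succ, mul_assoc, h, Matrix.mul_smul, ih, smul_smul, pow_succ]
      congr 1
      ring
  have hsumA : Summable (fun i : ℕ => ((Nat.factorial i : ℂ))⁻¹ • A ^ i) :=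
    NormedSpace.expSeries_summable' (𝕂 := ℂ) A
  have hsumc : Summable (fun i : ℕ => ((Nat.factorial i : ℂ))⁻¹ * μ ^ i) := by
    have := NormedSpace.expSeries_summable' (𝕂 := ℂ) μ
    simpa [smul_eq_mul] using this
  rw [NormedSpace.exp_eq_tsum (𝕂 := ℂ)]
  rw [← hsumA.tsum_mul_right B]
  have hterm : ∀ i : ℕ, (((Nat.factorial i : ℂ))⁻¹ • A ^ i) * B = (((Nat.factorial i : ℂ))⁻¹ * μ ^ i) • B := by
    intro i
    rw [smul_mul_assoc, hpow i, smul_smul]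
  rw [tsum_congr hterm, hsumc.tsum_smul_const]
  congr 1
  rw [Complex.exp_eq_exp_ℂ, NormedSpace.exp_eq_tsum (𝕂 := ℂ)]
  exact tsum_congr fun i => by rw [smul_eq_mul]


lemma projOne_eq (k : ℕ) (m : ℕ → ℕ) : projOne k m = projMat k m 1 := by
  ext a b
  simp only [projOne, projMat, Matrix.of_apply]
  have ha := one_le_blk (2*k) m (a:ℕ)
  have hb := one_le_blk (2*k) m (b:ℕ)
  rw [if_neg (show ¬(blk (2*k) m (a:ℕ) < 1 ∧ blk (2*k) m (b:ℕ) < 1) by omega),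
    if_neg (show ¬((blk (2*k) m (a:ℕ) < 1 ∧ blk (2*k) m (b:ℕ) = 1) ∨
      (blk (2*k) m (a:ℕ) = 1 ∧ blk (2*k) m (b:ℕ) < 1)) by omega),
    sig_one]


/-- Spectral decomposition of the evolution: for `G = Γ(m₁,…,m_{2k})`,
`exp(−itL) = e^{−itλ₀(1)} P₁ + Σ_{j=2}^{2k} e^{−itλ(j)} P_j + (1/n) J`. -/
theorem exp_neg_smul_lapMatrix_eq (k : ℕ) (hk : 1 ≤ k) (m : ℕ → ℕ)
    (hm : ∀ i, 1 ≤ i → i ≤ 2 * k → 1 ≤ m i) (hm1 : 2 ≤ m 1) (t : ℝ) :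
    Ut (GammaEven (2 * k) m) t =
      Complex.exp (-(Complex.I * (t : ℂ)) * (lam0 k m 1 : ℂ)) • projOne k m +
      (∑ j ∈ Finset.Icc 2 (2 * k),
        Complex.exp (-(Complex.I * (t : ℂ)) * (lam k m j : ℂ)) • projMat k m j) +
      ((sig m (2 * k) : ℂ))⁻¹ • (Matrix.of fun _ _ => (1 : ℂ)) := by
  have h2k : 1 ≤ 2*k := by omega
  have hmain : Ut (GammaEven (2 * k) m) t
      = (∑ j ∈ Finset.Icc 1 (2*k),
          Complex.exp ((-(Complex.I * (t:ℂ))) * (lamU k m j : ℂ)) • projMat k m j)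
        + ((sig m (2 * k) : ℂ))⁻¹ • (Matrix.of fun _ _ => (1 : ℂ)) := by
    have hstep : Ut (GammaEven (2 * k) m) t
        = NormedSpace.exp ((-(Complex.I * (t:ℂ))) • (GammaEven (2*k) m).lapMatrix ℂ) *
          ((∑ j ∈ Finset.Icc 1 (2*k), projMat k m j)
            + ((sig m (2*k) : ℂ))⁻¹ • (Matrix.of fun _ _ => (1:ℂ))) := by
      rw [sum_proj_id k m hm1 hk, mul_one, Ut]
    rw [hstep, mul_add, Finset.mul_sum, Matrix.mul_smul]
    congr 1
    · exact Finset.sum_congr rfl (fun j hj => by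
        simp only [Finset.mem_Icc] at hj
        exact exp_mul_eigen _ _ _ (by
          rw [Matrix.smul_mul, lap_mul_proj k m hm1 hj.1 hj.2, smul_smul]))
    · congr 1
      have h0 : ((-(Complex.I * (t:ℂ))) • (GammaEven (2*k) m).lapMatrix ℂ) *
          (Matrix.of fun _ _ => (1:ℂ)) = (0:ℂ) • (Matrix.of fun _ _ => (1:ℂ)) := by
        rw [Matrix.smul_mul, lap_mul_J, smul_zero, zero_smul]
      have h1 := exp_mul_eigen _ _ _ h0
      rwa [Complex.exp_zero, one_smul] at h1
  rw [hmain, ← Finset.insert_Icc_add_one_left_eq_Icc h2k,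
    Finset.sum_insert (by simp [Finset.mem_Icc])]
  congr 1
  congr 1
  · rw [show lamU k m 1 = lam0 k m 1 by
      rw [lamU_eq_lam k m le_rfl, lam, if_pos odd_one], projOne_eq k m]
  · exact Finset.sum_congr rfl fun j hj => by
      simp only [Finset.mem_Icc] at hj
      rw [lamU_eq_lam k m (by omega : 1 ≤ j)]
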